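/- In ℝ^3, the segment from (0,0,0) to (1,2,2) and the segment from (0,1,2) to (2,2,1) are disjoint and their Euclidean distance equals 1/(5√2). -/

import Mathlib

/-- Points of ℝ^3 as elements of Euclidean space. -/
noncomputable def pt3 (x y z : ℝ) : EuclideanSpace ℝ (Fin 3) := WithLp.toLp 2 ![x, y, z]

lemma sqrt_fifty : Real.sqrt (1/50) = 1/(5*Real.sqrt 2) := by
  rw [show (1/50:ℝ) = (1/(5*Real.sqrt 2))^2 by
    rw [div_pow, mul_pow, Real.sq_sqrt (by norm_num : (0:ℝ) ≤ 2)]; norm_num]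
  exact Real.sqrt_sq (by positivity)

lemma dist_lb : ∀ p ∈ segment ℝ (pt3 0 0 0) (pt3 1 2 2),
    ∀ q ∈ segment ℝ (pt3 0 1 2) (pt3 2 2 1), 1/(5*Real.sqrt 2) ≤ dist p q := by
  rintro p hp q hq
  rw [segment_eq_image] at hp hq
  obtain ⟨t, ht, rfl⟩ := hp
  obtain ⟨s, hs, rfl⟩ := hq
  rw [EuclideanSpace.dist_eq, ← sqrt_fifty]
  apply Real.sqrt_le_sqrt
  rw [Fin.sum_univ_three]
  simp only [pt3, PiLp.add_apply, PiLp.smul_apply, Matrix.cons_val_zero, Matrix.cons_val_one,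
    Matrix.head_cons, Matrix.cons_val_two, Matrix.tail_cons, smul_eq_mul, Real.dist_eq,
    PiLp.toLp_apply, WithLp.ofLp_toLp]
  rw [sq_abs, sq_abs, sq_abs]
  nlinarith [sq_nonneg (9*t-2*s-6), sq_nonneg (50*s-21)]

lemma dist_attained : dist ((1 - (19/25:ℝ)) • pt3 0 0 0 + (19/25:ℝ) • pt3 1 2 2)
    ((1 - (21/50:ℝ)) • pt3 0 1 2 + (21/50:ℝ) • pt3 2 2 1) = 1/(5*Real.sqrt 2) := by
  rw [EuclideanSpace.dist_eq, ← sqrt_fifty]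
  congr 1
  rw [Fin.sum_univ_three]
  simp only [pt3, PiLp.add_apply, PiLp.smul_apply, Matrix.cons_val_zero, Matrix.cons_val_one,
    Matrix.head_cons, Matrix.cons_val_two, Matrix.tail_cons, smul_eq_mul, Real.dist_eq,
    PiLp.toLp_apply, WithLp.ofLp_toLp]
  rw [sq_abs, sq_abs, sq_abs]
  norm_num

/-- In ℝ^3, the segment from (0,0,0) to (1,2,2) and the segment from
(0,1,2) to (2,2,1) are disjoint and their Euclidean distance equals 1/(5√2). -/
theorem stmt_18 :
    let P := segment ℝ (pt3 0 0 0) (pt3 1 2 2)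
    let Q := segment ℝ (pt3 0 1 2) (pt3 2 2 1)
    P ∩ Q = ∅ ∧ sInf (Set.image2 dist P Q) = 1 / (5 * Real.sqrt 2) := by
  intro P Q
  have hp0 : ((1 - (19/25:ℝ)) • pt3 0 0 0 + (19/25:ℝ) • pt3 1 2 2) ∈ P := by
    rw [show P = segment ℝ (pt3 0 0 0) (pt3 1 2 2) from rfl, segment_eq_image]
    exact ⟨19/25, by norm_num, rfl⟩
  have hq0 : ((1 - (21/50:ℝ)) • pt3 0 1 2 + (21/50:ℝ) • pt3 2 2 1) ∈ Q := by
    rw [show Q = segment ℝ (pt3 0 1 2) (pt3 2 2 1) from rfl, segment_eq_image]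
    exact ⟨21/50, by norm_num, rfl⟩
  have hmem : (1 / (5 * Real.sqrt 2)) ∈ Set.image2 dist P Q := by
    rw [← dist_attained]
    exact Set.mem_image2_of_mem hp0 hq0
  constructor
  · rw [Set.eq_empty_iff_forall_notMem]
    rintro x ⟨hxP, hxQ⟩
    have h := dist_lb x hxP x hxQ
    rw [dist_self] at h
    have : 0 < 1/(5*Real.sqrt 2) := by positivity
    linarith
  · apply le_antisymm
    · exact csInf_le ⟨0, by rintro _ ⟨p, hp, q, hq, rfl⟩; exact dist_nonneg⟩ hmem
    · exact le_csInf ⟨_, hmem⟩ (by rintro _ ⟨p, hp, q, hq, rfl⟩; exact dist_lb p hp q hq)
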